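/- In a presheaf category on a small category C, an object K is (super-)compact — i.e., every jointly epimorphic family of maps into K contains a single epimorphism — if and only if K admits an epimorphism from a representable presheaf. -/

import Mathlib

open CategoryTheory Opposite

universe u

/-- The presheaf of sieves. -/
def sieveP (C : Type u) [SmallCategory C] : Cᵒᵖ ⥤ Type u where
  obj X := Sieve X.unop
  map u := TypeCat.ofHom (fun S => S.pullback u.unop)
  map_id X := by ext S : 3; exact Sieve.pullback_id (S := S)
  map_comp u v := by
    ext S : 3
    apply Sieve.ext
    intro d g
    show S (g ≫ (v.unop ≫ u.unop)) ↔ S ((g ≫ v.unop) ≫ u.unop)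
    rw [Category.assoc]

/-- Characteristic map of the joint image of a family of maps into `K`. -/
def chi {C : Type u} [SmallCategory C] {K : Cᵒᵖ ⥤ Type u} {ι : Type u}
    (E : ι → Cᵒᵖ ⥤ Type u) (f : ∀ i, E i ⟶ K) : K ⟶ sieveP C where
  app X := TypeCat.ofHom fun x =>
    { arrows := fun d u => ∃ i e, (f i).app (op d) e = K.map u.op x
      downward_closed := by
        rintro Y d v ⟨i, e, he⟩ g
        refine ⟨i, (E i).map g.op e, ?_⟩
        rw [FunctorToTypes.naturality, he, op_comp, FunctorToTypes.map_comp_apply] }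
  naturality X Y w := by
    ext x
    apply Sieve.ext
    intro d u
    show (∃ i e, (f i).app (op d) e = K.map u.op (K.map w x)) ↔
      ∃ i e, (f i).app (op d) e = K.map ((u ≫ w.unop).op) x
    simp [FunctorToTypes.map_comp_apply]

/-- The "always true" map. -/
def trueMap {C : Type u} [SmallCategory C] (K : Cᵒᵖ ⥤ Type u) : K ⟶ sieveP C where
  app X := TypeCat.ofHom fun _ => (⊤ : Sieve X.unop)
  naturality X Y w := by ext x; exact (Sieve.pullback_top (f := w.unop)).symm

theorem stmt11 {C : Type u} [SmallCategory C] (K : Cᵒᵖ ⥤ Type u) :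
    (∀ {ι : Type u} (E : ι → Cᵒᵖ ⥤ Type u) (f : ∀ i, E i ⟶ K),
        (∀ {Z : Cᵒᵖ ⥤ Type u} (g h : K ⟶ Z),
          (∀ i, f i ≫ g = f i ≫ h) → g = h) →
        ∃ i, Epi (f i)) ↔
      ∃ (c : C) (p : yoneda.obj c ⟶ K), Epi p := by
  constructor
  · intro H
    have hje : ∀ {Z : Cᵒᵖ ⥤ Type u} (g h : K ⟶ Z),
        (∀ i : Σ c : C, K.obj (op c), yonedaEquiv.symm i.2 ≫ g = yonedaEquiv.symm i.2 ≫ h) →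
        g = h := by
      intro Z g h hgh
      ext X x
      have h2 := congrArg yonedaEquiv (hgh ⟨X.unop, x⟩)
      rw [yonedaEquiv_comp, yonedaEquiv_comp, Equiv.apply_symm_apply] at h2
      exact h2
    obtain ⟨⟨c, x⟩, hx⟩ := H (fun i : Σ c : C, K.obj (op c) => yoneda.obj i.1)
      (fun i => yonedaEquiv.symm i.2) hje
    exact ⟨c, yonedaEquiv.symm x, hx⟩
  · rintro ⟨c, p, hp⟩ ι E f hf
    have key := hf (chi E f) (trueMap K) (fun i => by
      ext X e
      refine Sieve.ext ?_
      intro d u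
      show (∃ j e', (f j).app (op d) e' = K.map u.op ((f i).app X e)) ↔ (⊤ : Sieve X.unop) u
      simp only [Sieve.top_apply, iff_true]
      exact ⟨i, (E i).map u.op e, FunctorToTypes.naturality (f i) u.op e⟩)
    have hx : ∃ i e, (f i).app (op c) e = yonedaEquiv p := by
      have h0 : (chi E f).app (op c) (yonedaEquiv p) = (trueMap K).app (op c) (yonedaEquiv p) := by
        rw [key]
      have h1 : ((chi E f).app (op c) (yonedaEquiv p)).arrows (𝟙 c) := by
        rw [h0]; exact Sieve.top_apply _
      obtain ⟨i, e, he⟩ := h1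
      exact ⟨i, e, by simpa using he⟩
    obtain ⟨i, e, he⟩ := hx
    have hfac : yonedaEquiv.symm e ≫ f i = p := by
      apply yonedaEquiv.injective
      rw [yonedaEquiv_comp]
      simpa using he
    have : Epi (yonedaEquiv.symm e ≫ f i) := hfac ▸ hp
    exact ⟨i, epi_of_epi (yonedaEquiv.symm e) (f i)⟩
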